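/- Let ι be an index type, w : ι → ℝ with w ξ ≥ 1 for all ξ, satisfying the upper Weyl law with exponent Q > 0 (finite level sets, N(λ) ≤ c₂·λ^Q for λ ≥ 1). Let q > 0 and let ψ : ℝ → ℝ be a nonnegative bounded function whose support is contained in an interval [a, R] with 0 < a < R (so ψ vanishes in a neighborhood of 0, corresponding to ψ ∈ L¹(ℝ⁺₀ ; ds/s) ∩ C₀^∞). Then there exists a constant C > 0, independent of t, such that for every t > 0: ∑'_ξ (w ξ)^{−Q} · ψ(t·(w ξ)^q) ≤ C. (This is the critical-order case m = −Q of the paper's regularised-trace theorem: the trace Tr(A ψ(tE)) of an operator of order −Q against a cutoff integrable with respect to ds/s is bounded uniformly in t.) -/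
import Mathlib

theorem regularised_trace_bound_critical_order
    {ι : Type*} (w : ι → ℝ) (hw : ∀ ξ, 1 ≤ w ξ)
    (hfin : ∀ lam : ℝ, 1 ≤ lam → {ξ | w ξ ≤ lam}.Finite)
    (Q : ℝ) (hQ : 0 < Q) (c₂ : ℝ) (hc₂ : 0 < c₂)
    (hN : ∀ lam : ℝ, 1 ≤ lam → (Nat.card {ξ // w ξ ≤ lam} : ℝ) ≤ c₂ * lam ^ Q)
    (q : ℝ) (hq : 0 < q)
    (ψ : ℝ → ℝ) (hψ0 : ∀ x, 0 ≤ ψ x) (B : ℝ) (hψB : ∀ x, ψ x ≤ B)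
    (a R : ℝ) (ha : 0 < a) (haR : a < R)
    (hsupp : Function.support ψ ⊆ Set.Icc a R) :
    ∃ C : ℝ, 0 < C ∧ ∀ t : ℝ, 0 < t →
      (∑' ξ, (w ξ) ^ (-Q) * ψ (t * (w ξ) ^ q)) ≤ C := by
  have hB : 0 ≤ B := le_trans (hψ0 0) (hψB 0)
  have hR : 0 < R := ha.trans haR
  have hRa : 0 ≤ R / a := le_of_lt (div_pos hR ha)
  refine ⟨c₂ * B * (R / a) ^ (Q / q) + 1, by positivity, fun t ht => ?_⟩
  have key : (∑' ξ, (w ξ) ^ (-Q) * ψ (t * (w ξ) ^ q)) ≤ c₂ * B * (R / a) ^ (Q / q) := by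
    -- ψ vanishes outside [a, R]
    have hψ_zero : ∀ x, x ∉ Set.Icc a R → ψ x = 0 := by
      intro x hx
      by_contra h
      exact hx (hsupp h)
    by_cases htR : R < t
    · -- every term is zero
      have : ∀ ξ, (w ξ) ^ (-Q) * ψ (t * (w ξ) ^ q) = 0 := by
        intro ξ
        have hw1 : (1:ℝ) ≤ (w ξ) ^ q := Real.one_le_rpow (hw ξ) hq.le
        have : R < t * (w ξ) ^ q := by nlinarith
        rw [hψ_zero _ (by simp [Set.mem_Icc]; intro _; linarith), mul_zero]
      rw [tsum_congr this, tsum_zero]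
      positivity
    · push_neg at htR
      have hRt1 : (1:ℝ) ≤ R / t := (one_le_div ht).mpr htR
      set M : ℝ := (R / t) ^ (1 / q) with hM
      have hM1 : (1:ℝ) ≤ M := Real.one_le_rpow hRt1 (by positivity)
      have hFfin := hfin M hM1
      set F := hFfin.toFinset with hF
      have hvan : ∀ ξ ∉ F, (w ξ) ^ (-Q) * ψ (t * (w ξ) ^ q) = 0 := by
        intro ξ hξ
        have hξ' : ¬ w ξ ≤ M := by simpa [hF, Set.Finite.mem_toFinset] using hξ
        push_neg at hξ'
        have hwpos : (0:ℝ) < w ξ := lt_of_lt_of_le one_pos (hw ξ)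
        have hMq : M ^ q = R / t := by
          rw [hM, ← Real.rpow_mul (by positivity : (0:ℝ) ≤ R / t),
            one_div_mul_cancel (ne_of_gt hq), Real.rpow_one]
        have : R / t < (w ξ) ^ q := by
          rw [← hMq]
          exact Real.rpow_lt_rpow (by positivity) hξ' hq
        have : R < t * (w ξ) ^ q := by
          rw [div_lt_iff₀ ht] at this; linarith [this]
        rw [hψ_zero _ (by simp [Set.mem_Icc]; intro _; linarith), mul_zero]
      rw [tsum_eq_sum hvan]
      -- bound each term
      have hterm : ∀ ξ ∈ F, (w ξ) ^ (-Q) * ψ (t * (w ξ) ^ q) ≤ B * (t / a) ^ (Q / q) := by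
        intro ξ _
        have hwpos : (0:ℝ) < w ξ := lt_of_lt_of_le one_pos (hw ξ)
        by_cases hz : ψ (t * (w ξ) ^ q) = 0
        · rw [hz, mul_zero]; positivity
        · have hmem : t * (w ξ) ^ q ∈ Set.Icc a R := hsupp hz
          have hal : a ≤ t * (w ξ) ^ q := hmem.1
          have hwq : a / t ≤ (w ξ) ^ q := (div_le_iff₀ ht).mpr (by linarith [hal])
          have hat : (0:ℝ) < a / t := div_pos ha ht
          have hwl : (a / t) ^ (1 / q) ≤ w ξ := by
            calc (a / t) ^ (1 / q) ≤ ((w ξ) ^ q) ^ (1 / q) :=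
                  Real.rpow_le_rpow hat.le hwq (by positivity)
              _ = w ξ := by
                  rw [← Real.rpow_mul hwpos.le, mul_one_div, div_self (ne_of_gt hq),
                    Real.rpow_one]
          have h1 : (w ξ) ^ (-Q) ≤ ((a / t) ^ (1 / q)) ^ (-Q) :=
            Real.rpow_le_rpow_of_nonpos (by positivity) hwl (by linarith)
          have h2' : ((a / t) ^ (1 / q)) ^ (-Q) = (t / a) ^ (Q / q) := by
            rw [← Real.rpow_mul hat.le,
              show t / a = (a / t)⁻¹ from (inv_div a t).symm,
              Real.inv_rpow hat.le, ← Real.rpow_neg hat.le]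
            congr 1
            ring
          calc (w ξ) ^ (-Q) * ψ (t * (w ξ) ^ q)
              ≤ ((a / t) ^ (1 / q)) ^ (-Q) * B := by
                apply mul_le_mul h1 (hψB _) (hψ0 _) (by positivity)
            _ = B * (t / a) ^ (Q / q) := by rw [h2']; ring
      calc (∑ ξ ∈ F, (w ξ) ^ (-Q) * ψ (t * (w ξ) ^ q))
          ≤ ∑ _ξ ∈ F, B * (t / a) ^ (Q / q) := Finset.sum_le_sum hterm
        _ = (F.card : ℝ) * (B * (t / a) ^ (Q / q)) := by
            rw [Finset.sum_const, nsmul_eq_mul]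
        _ ≤ (c₂ * M ^ Q) * (B * (t / a) ^ (Q / q)) := by
            apply mul_le_mul_of_nonneg_right _ (by positivity)
            have hcard : (F.card : ℝ) = (Nat.card {ξ // w ξ ≤ M} : ℝ) := by
              congr 1
              rw [hF, ← Set.ncard_eq_toFinset_card _ hFfin, ← Nat.card_coe_set_eq]; rfl
            rw [hcard]
            exact hN M hM1
        _ = c₂ * B * ((R / t) ^ (Q / q) * (t / a) ^ (Q / q)) := by
            have : M ^ Q = (R / t) ^ (Q / q) := by
              rw [hM, ← Real.rpow_mul (by positivity), one_div, inv_mul_eq_div]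
            rw [this]; ring
        _ = c₂ * B * (R / a) ^ (Q / q) := by
            rw [← Real.mul_rpow (by positivity) (by positivity)]
            congr 2
            field_simp
  linarith
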